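/- Let $k = \mathbb{F}_q \subseteq K = \mathbb{F}_{q^3}$ be finite fields of characteristic $2$, let $\mathrm{Tr}: K \to k$ be the trace, and let $X = \{(a,d) \in K^* \times K \mid a + a^q + d \neq 0,\ \mathrm{Tr}(a) + \mathrm{Tr}(d) \neq 1\}$. The Frobenius map $\varphi(a,d) = (a^q, d^q)$ maps $X$ to itself and the number of its orbits on $X$ equals $\frac{1}{3}\left(q^6 - q^5 - 2q^3 + 4q^2 - 6q + 7\right)$. -/

import Mathlib

open Finset


/-- The defining conditions of the set `X` of descent data `𝒟_{γ₃}`: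
pairs `(a,d) ∈ K* × K` with `a + a^q + d ≠ 0` and `Tr(a) + Tr(d) ≠ 1`,
where `Tr(x) = x + x^q + x^{q²}` is the trace of `K = 𝔽_{q³}` over `𝔽_q`. -/
def stmt8Cond (K : Type) [Field K] (q : ℕ) (v : K × K) : Prop :=
  v.1 ≠ 0 ∧ v.1 + v.1 ^ q + v.2 ≠ 0 ∧
    (v.1 + v.1 ^ q + v.1 ^ q ^ 2) + (v.2 + v.2 ^ q + v.2 ^ q ^ 2) ≠ 1

lemma orbit3 {S : Type} [Finite S] (f : S → S) (h3 : ∀ x, f (f (f x)) = x) :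
    3 * Nat.card (Quot fun x y => f x = y) =
      Nat.card S + 2 * Nat.card {x : S // f x = x} := by
  classical
  cases nonempty_fintype S
  have hinj : Function.Injective f := by
    intro a b h
    have : f (f (f a)) = f (f (f b)) := by rw [h]
    rwa [h3, h3] at this
  set r : S → S → Prop := fun x y => f x = y with hr
  set orb : S → Finset S := fun x => {x, f x, f (f x)} with horb
  have horbf : ∀ x, orb (f x) = orb x := by
    intro x
    ext y
    simp only [horb, mem_insert, mem_singleton, h3]
    tauto
  have hmemorb : ∀ x, x ∈ orb x := by intro x; simp [horb]
  have horb_eq : ∀ x y, y ∈ orb x → orb y = orb x := by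
    intro x y hy
    simp only [horb, mem_insert, mem_singleton] at hy
    rcases hy with rfl | rfl | rfl
    · rfl
    · exact horbf x
    · rw [horbf, horbf]
  have hmkf : ∀ z, Quot.mk r (f z) = Quot.mk r z :=
    fun z => (Quot.sound (show r z (f z) from rfl)).symm
  have hmk : ∀ x y, y ∈ orb x → Quot.mk r y = Quot.mk r x := by
    intro x y hy
    simp only [horb, mem_insert, mem_singleton] at hy
    rcases hy with rfl | rfl | rfl
    · rfl
    · exact hmkf x
    · rw [hmkf, hmkf]
  set O : Finset (Finset S) := Finset.univ.image orb with hO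
  -- the quotient is in bijection with O
  have hg : ∀ (a b : S), r a b →
      (⟨orb a, mem_image_of_mem orb (mem_univ a)⟩ : {o // o ∈ O}) =
      ⟨orb b, mem_image_of_mem orb (mem_univ b)⟩ := by
    intro a b hab
    have : orb b = orb a := by rw [← hab, horbf]
    exact Subtype.ext this.symm
  have hgbij : Function.Bijective
      (Quot.lift (fun x => (⟨orb x, mem_image_of_mem orb (mem_univ x)⟩ : {o // o ∈ O})) hg) := by
    constructor
    · intro u v h
      obtain ⟨a, rfl⟩ := Quot.exists_rep u
      obtain ⟨b, rfl⟩ := Quot.exists_rep v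
      have horb' : orb a = orb b := congrArg Subtype.val h
      have : b ∈ orb a := horb' ▸ hmemorb b
      exact (hmk a b this).symm
    · rintro ⟨o, ho⟩
      obtain ⟨x, -, rfl⟩ := mem_image.1 ho
      exact ⟨Quot.mk r x, rfl⟩
  have hcardQ : Nat.card (Quot r) = O.card := by
    rw [Nat.card_congr (Equiv.ofBijective _ hgbij), Nat.card_eq_fintype_card,
      Fintype.card_coe]
  -- orbits partition
  have hdisj : ∀ o₁ ∈ O, ∀ o₂ ∈ O, o₁ ≠ o₂ → Disjoint o₁ o₂ := by
    intro o₁ h₁ o₂ h₂ hne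
    obtain ⟨x, -, rfl⟩ := mem_image.1 h₁
    obtain ⟨y, -, rfl⟩ := mem_image.1 h₂
    rw [Finset.disjoint_left]
    intro z hz1 hz2
    exact hne ((horb_eq x z hz1).symm.trans (horb_eq y z hz2))
  have hcover : O.biUnion id = Finset.univ := by
    ext z
    simp only [mem_biUnion, id, mem_univ, iff_true]
    exact ⟨orb z, mem_image_of_mem orb (mem_univ z), hmemorb z⟩
  have hsum1 : ∑ o ∈ O, o.card = Fintype.card S := by
    calc ∑ o ∈ O, o.card = (O.biUnion fun o => o).card := (card_biUnion hdisj).symm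
    _ = Fintype.card S := by
        rw [show (O.biUnion fun o => o) = Finset.univ from hcover]
        exact card_univ
  have hdisj2 : ∀ o₁ ∈ O, ∀ o₂ ∈ O, o₁ ≠ o₂ →
      Disjoint (o₁.filter fun x => f x = x) (o₂.filter fun x => f x = x) := by
    intro o₁ h₁ o₂ h₂ hne
    exact (hdisj o₁ h₁ o₂ h₂ hne).mono (filter_subset _ _) (filter_subset _ _)
  have hcover2 : (O.biUnion fun o => o.filter fun x => f x = x) =
      Finset.univ.filter fun x => f x = x := by
    ext z
    simp only [mem_biUnion, mem_filter, mem_univ, true_and]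
    constructor
    · rintro ⟨o, -, -, hz⟩
      exact hz
    · intro hz
      exact ⟨orb z, mem_image_of_mem orb (mem_univ z), hmemorb z, hz⟩
  have hsum2 : ∑ o ∈ O, (o.filter fun x => f x = x).card =
      (Finset.univ.filter fun x => f x = x).card := by
    calc ∑ o ∈ O, (o.filter fun x => f x = x).card
        = (O.biUnion fun o => o.filter fun x => f x = x).card := (card_biUnion hdisj2).symm
    _ = _ := by rw [hcover2]
  have key : ∀ o ∈ O, o.card + 2 * (o.filter fun x => f x = x).card = 3 := by
    intro o ho
    obtain ⟨x, -, rfl⟩ := mem_image.1 ho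
    by_cases hx : f x = x
    · have h1 : orb x = {x} := by
        simp only [horb, hx]
        simp
      rw [h1]
      rw [filter_singleton]
      simp [hx]
    · have hx1 : x ≠ f x := fun h => hx h.symm
      have hffx : f (f x) ≠ f x := fun h => hx (hinj h)
      have hffx2 : f (f x) ≠ x := by
        intro h
        apply hx
        have := congrArg f h
        rw [h3] at this
        exact this.symm
      have hcard : (orb x).card = 3 := by
        rw [horb]
        rw [card_insert_of_notMem (by simp [hx1, hffx2.symm]),
          card_insert_of_notMem (by simp [hffx.symm]), card_singleton]
      have hfilt : ((orb x).filter fun z => f z = z) = ∅ := by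
        rw [filter_eq_empty_iff]
        intro z hz
        simp only [horb, mem_insert, mem_singleton] at hz
        rcases hz with rfl | rfl | rfl
        · exact hx
        · exact fun h => hffx (by rwa [])
        · intro h
          rw [h3] at h
          exact hffx2 h.symm
      rw [hcard, hfilt]
      simp
  have : 3 * O.card = Fintype.card S + 2 * (Finset.univ.filter fun x => f x = x).card := by
    calc 3 * O.card = ∑ _o ∈ O, 3 := by rw [Finset.sum_const, smul_eq_mul, mul_comm]
    _ = ∑ o ∈ O, (o.card + 2 * (o.filter fun x => f x = x).card) :=
        (Finset.sum_congr rfl key).symm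
    _ = (∑ o ∈ O, o.card) + 2 * ∑ o ∈ O, (o.filter fun x => f x = x).card := by
        rw [Finset.sum_add_distrib, Finset.mul_sum]
    _ = _ := by rw [hsum1, hsum2]
  rw [hcardQ, this, Nat.card_eq_fintype_card]
  congr 1
  rw [Nat.card_eq_fintype_card, Fintype.card_subtype]

def stmt8f {K : Type} [Field K] {q : ℕ}
    (h : ∀ v : K × K, stmt8Cond K q v → stmt8Cond K q (v.1 ^ q, v.2 ^ q)) :
    {v : K × K // stmt8Cond K q v} → {v : K × K // stmt8Cond K q v} :=
  fun x => ⟨(x.1.1 ^ q, x.1.2 ^ q), h x.1 x.2⟩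

set_option maxHeartbeats 1600000 in
/-- Let `k = 𝔽_q ⊆ K = 𝔽_{q³}` be finite fields of characteristic 2. The
Frobenius `φ(a,d) = (a^q, d^q)` maps `X = 𝒟_{γ₃}` to itself and the number of
its orbits on `X` equals `(q⁶ - q⁵ - 2q³ + 4q² - 6q + 7)/3`. -/
theorem stmt_8 (K : Type) [Field K] [Fintype K] [CharP K 2] (q : ℕ)
    (hK : Fintype.card K = q ^ 3) :
    (∀ v : K × K, stmt8Cond K q v → stmt8Cond K q (v.1 ^ q, v.2 ^ q)) ∧
    (3 : ℤ) * Nat.card (Quot fun (x y : {v : K × K // stmt8Cond K q v}) =>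
        (x.1.1 ^ q, x.1.2 ^ q) = y.1)
      = q ^ 6 - q ^ 5 - 2 * q ^ 3 + 4 * q ^ 2 - 6 * q + 7 := by
  classical
  haveI : Fact (Nat.Prime 2) := ⟨Nat.prime_two⟩
  -- q is a power of 2, q ≥ 2
  obtain ⟨n, -, hcard2⟩ := FiniteField.card K 2
  have hq1 : q ≠ 1 := by
    intro h
    rw [h, one_pow] at hK
    have h2lt := Fintype.one_lt_card (α := K)
    omega
  have hqdvd : q ∣ 2 ^ (n : ℕ) := by
    rw [← hcard2, hK]
    exact ⟨q ^ 2, by ring⟩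
  obtain ⟨m, -, hqm⟩ := (Nat.dvd_prime_pow Nat.prime_two).1 hqdvd
  have hm : m ≠ 0 := by rintro rfl; rw [pow_zero] at hqm; exact hq1 hqm
  have hq2 : 2 ≤ q := by
    rw [hqm]
    calc 2 = 2 ^ 1 := rfl
    _ ≤ 2 ^ m := Nat.pow_le_pow_right (by norm_num) (by omega)
  have hq0 : 0 < q := by omega
  -- Frobenius facts
  have hadd : ∀ x y : K, (x + y) ^ q = x ^ q + y ^ q := by
    intro x y; rw [hqm]; exact add_pow_char_pow x y 2 m
  have hq3 : ∀ x : K, x ^ q ^ 3 = x := by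
    intro x; rw [← hK]; exact FiniteField.pow_card x
  have hqq : ∀ x : K, (x ^ q) ^ q = x ^ q ^ 2 := by
    intro x; rw [← pow_mul, pow_two]
  have hqq2 : ∀ x : K, (x ^ q ^ 2) ^ q = x := by
    intro x
    rw [← pow_mul, ← pow_succ]
    exact hq3 x
  have hqq3 : ∀ x : K, (x ^ q) ^ q ^ 2 = x := by
    intro x
    rw [← pow_mul, show q * q ^ 2 = q ^ 3 by ring]
    exact hq3 x
  have hadd2 : ∀ x y : K, (x + y) ^ q ^ 2 = x ^ q ^ 2 + y ^ q ^ 2 := by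
    intro x y
    rw [← hqq x, ← hqq y, ← hqq (x + y), hadd, hadd]
  have hself : ∀ x : K, x + x = 0 := CharTwo.add_self_eq_zero
  -- the trace map
  set T : K → K := fun x => x + x ^ q + x ^ q ^ 2 with hT
  have hTdef : ∀ x : K, T x = x + x ^ q + x ^ q ^ 2 := fun x => rfl
  have hTadd : ∀ x y, T (x + y) = T x + T y := by
    intro x y
    simp only [hTdef, hadd, hadd2]
    ring
  have hTshift : ∀ x, T (x ^ q) = T x := by
    intro x
    simp only [hTdef, hqq, hqq3]
    ring
  have hTfixq : ∀ x, (T x) ^ q = T x := by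
    intro x
    simp only [hTdef, hadd, hqq, hqq2]
    ring
  have hT0 : T 0 = 0 := by
    simp only [hTdef, zero_pow hq0.ne', zero_pow (pow_ne_zero 2 hq0.ne'), add_zero]
  -- Part 1
  have part1 : ∀ v : K × K, stmt8Cond K q v → stmt8Cond K q (v.1 ^ q, v.2 ^ q) := by
    rintro ⟨a, d⟩ hv
    obtain ⟨ha, hb, hc⟩ := hv
    refine ⟨pow_ne_zero _ ha, ?_, ?_⟩
    · show a ^ q + (a ^ q) ^ q + d ^ q ≠ 0
      rw [← hadd, ← hadd]
      exact pow_ne_zero _ hb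
    · show (a ^ q + (a ^ q) ^ q + (a ^ q) ^ q ^ 2) + (d ^ q + (d ^ q) ^ q + (d ^ q) ^ q ^ 2) ≠ 1
      rw [← hTdef (a ^ q), ← hTdef (d ^ q), hTshift, hTshift]
      exact hc
  refine ⟨part1, ?_⟩
  -- root counting tool
  have hrootbound : ∀ (p : Polynomial K), p ≠ 0 → ∀ s : Finset K,
      (∀ x ∈ s, Polynomial.eval x p = 0) → s.card ≤ p.natDegree := by
    intro p hp s hs
    apply Polynomial.card_le_degree_of_subset_roots
    intro x hx
    rw [Polynomial.mem_roots hp]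
    exact hs x (Finset.mem_def.2 hx)
  have hq2ge4 : 4 ≤ q ^ 2 := by nlinarith
  have hq2neq : q ^ 2 ≠ q := by nlinarith
  have hq2ne1 : q ^ 2 ≠ 1 := by omega
  have hqle : q ≤ q ^ 2 := by nlinarith
  -- kernel of T has at most q^2 elements
  have hZle : (univ.filter fun x : K => T x = 0).card ≤ q ^ 2 := by
    set p : Polynomial K := Polynomial.X + Polynomial.X ^ q + Polynomial.X ^ q ^ 2 with hp
    have hp0 : p ≠ 0 := by
      intro h
      have hco := congrArg (fun r => Polynomial.coeff r (q ^ 2)) h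
      simp only [hp, Polynomial.coeff_add, Polynomial.coeff_X_pow, Polynomial.coeff_X,
        Polynomial.coeff_zero, if_pos rfl, if_neg hq2neq, if_neg (Ne.symm hq2ne1)] at hco
      norm_num at hco
    refine le_trans (hrootbound p hp0 _ ?_) ?_
    · intro x hx
      simp only [mem_filter, mem_univ, true_and] at hx
      simp only [hp, Polynomial.eval_add, Polynomial.eval_pow, Polynomial.eval_X]
      rw [← hTdef x]
      exact hx
    · rw [hp]
      refine le_trans (Polynomial.natDegree_add_le _ _) (max_le (le_trans
        (Polynomial.natDegree_add_le _ _) (max_le ?_ ?_)) ?_)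
      · rw [Polynomial.natDegree_X]; omega
      · rw [Polynomial.natDegree_X_pow]; exact hqle
      · rw [Polynomial.natDegree_X_pow]
  -- fixed field has at most q elements
  have hFle : (univ.filter fun x : K => x ^ q = x).card ≤ q := by
    set p : Polynomial K := Polynomial.X + Polynomial.X ^ q with hp
    have hp0 : p ≠ 0 := by
      intro h
      have hco := congrArg (fun r => Polynomial.coeff r q) h
      simp only [hp, Polynomial.coeff_add, Polynomial.coeff_X_pow, Polynomial.coeff_X,
        Polynomial.coeff_zero, if_pos rfl, if_neg (Ne.symm hq1)] at hco
      norm_num at hco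
    refine le_trans (hrootbound p hp0 _ ?_) ?_
    · intro x hx
      simp only [mem_filter, mem_univ, true_and] at hx
      simp only [hp, Polynomial.eval_add, Polynomial.eval_pow, Polynomial.eval_X]
      rw [hx]
      exact hself x
    · rw [hp]
      refine le_trans (Polynomial.natDegree_add_le _ _) (max_le ?_ ?_)
      · rw [Polynomial.natDegree_X]; omega
      · rw [Polynomial.natDegree_X_pow]
  set Z : Finset K := univ.filter fun x : K => T x = 0 with hZ
  set F : Finset K := univ.filter fun x : K => x ^ q = x with hF
  set I : Finset K := univ.image T with hI
  have hfib : ∀ c ∈ I, (univ.filter fun x => T x = c).card = Z.card := by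
    intro c hc
    obtain ⟨x0, -, hx0⟩ := mem_image.1 hc
    refine card_nbij' (fun d => d + x0) (fun d => d + x0) ?_ ?_ ?_ ?_
    · intro d hd
      simp only [Finset.mem_coe, mem_filter, mem_univ, true_and, hZ] at hd ⊢
      rw [hTadd, hd, hx0]
      exact hself c
    · intro d hd
      simp only [Finset.mem_coe, mem_filter, mem_univ, true_and, hZ] at hd ⊢
      rw [hTadd, hd, hx0, zero_add]
    · intro a _
      show a + x0 + x0 = a
      rw [add_assoc, hself, add_zero]
    · intro a _
      show a + x0 + x0 = a
      rw [add_assoc, hself, add_zero]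
  have hIZ : q ^ 3 = I.card * Z.card := by
    calc q ^ 3 = (univ : Finset K).card := by rw [card_univ, hK]
    _ = ∑ c ∈ I, (univ.filter fun x => T x = c).card :=
        card_eq_sum_card_fiberwise (fun x _ => mem_image_of_mem T (mem_univ x))
    _ = ∑ _c ∈ I, Z.card := sum_congr rfl hfib
    _ = I.card * Z.card := by rw [sum_const, smul_eq_mul]
  have hIF : I ⊆ F := by
    intro c hc
    obtain ⟨x0, -, hx0⟩ := mem_image.1 hc
    simp only [hF, mem_filter, mem_univ, true_and]
    rw [← hx0]
    exact hTfixq x0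
  have hIle : I.card ≤ q := le_trans (card_le_card hIF) hFle
  have hZcard : Z.card = q ^ 2 := by
    have h1 : q * q ^ 2 ≤ q * Z.card := by
      calc q * q ^ 2 = q ^ 3 := by ring
      _ = I.card * Z.card := hIZ
      _ ≤ q * Z.card := Nat.mul_le_mul_right _ hIle
    have h2 : q ^ 2 ≤ Z.card := Nat.le_of_mul_le_mul_left h1 hq0
    omega
  have hIcard : I.card = q := by
    have : I.card * q ^ 2 = q * q ^ 2 := by
      rw [← hZcard]
      rw [← hIZ]
      rw [hZcard]; ring
    exact Nat.eq_of_mul_eq_mul_right (by omega) this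
  have hFI : I = F := Finset.eq_of_subset_of_card_le hIF (le_trans hFle hIcard.ge)
  have hFcard : F.card = q := by rw [← hFI, hIcard]
  have hfib2 : ∀ c ∈ F, (univ.filter fun x => T x = c).card = q ^ 2 := by
    intro c hc
    rw [hfib c (hFI ▸ hc), hZcard]
  -- membership facts for F
  have hmemF : ∀ x : K, x ∈ F ↔ x ^ q = x := by
    intro x; simp only [hF, mem_filter, mem_univ, true_and]
  have h0F : (0 : K) ∈ F := (hmemF 0).2 (zero_pow hq0.ne')
  have h1F : (1 : K) ∈ F := (hmemF 1).2 (one_pow q)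
  have haddF : ∀ x y : K, x ∈ F → y ∈ F → x + y ∈ F := by
    intro x y hx hy
    rw [hmemF] at hx hy ⊢
    rw [hadd, hx, hy]
  have hTF : ∀ x : K, T x ∈ F := fun x => (hmemF _).2 (hTfixq x)
  -- count of d for fixed a ≠ 0
  have hcondiff : ∀ a d : K, a ≠ 0 →
      (stmt8Cond K q (a, d) ↔ (d ≠ a + a ^ q ∧ T d ≠ 1 + T a)) := by
    intro a d ha
    simp only [stmt8Cond]
    rw [← hTdef a, ← hTdef d]
    constructor
    · rintro ⟨-, h1, h2⟩
      refine ⟨fun hd => h1 ?_, fun hd => h2 ?_⟩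
      · rw [hd]
        exact hself (a + a ^ q)
      · linear_combination hd + hself (T a)
    · rintro ⟨h1, h2⟩
      refine ⟨ha, fun hd => h1 ?_, fun hd => h2 ?_⟩
      · linear_combination hd - hself (a + a ^ q)
      · linear_combination hd - hself (T a)
  have hTaq0 : ∀ a : K, T (a + a ^ q) = 0 := by
    intro a
    rw [hTadd, hTshift]
    exact hself (T a)
  have hperd : ∀ a : K, a ≠ 0 → (univ.filter fun d => stmt8Cond K q (a, d)).card
      = if T a = 1 then q ^ 3 - q ^ 2 else q ^ 3 - q ^ 2 - 1 := by
    intro a ha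
    rw [filter_congr (fun d _ => hcondiff a d ha)]
    have hcF : (1 + T a : K) ∈ F := haddF 1 (T a) h1F (hTF a)
    have hB : (univ.filter fun d : K => ¬ T d = 1 + T a).card = q ^ 3 - q ^ 2 := by
      rw [Finset.filter_not, card_sdiff_of_subset (filter_subset _ _), card_univ, hK,
        hfib2 _ hcF]
    by_cases hTa : T a = 1
    · rw [if_pos hTa]
      have hc0 : (1 + T a : K) = 0 := by rw [hTa]; exact hself 1
      have heq : (univ.filter fun d : K => d ≠ a + a ^ q ∧ T d ≠ 1 + T a)
          = univ.filter fun d : K => ¬ T d = 1 + T a := by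
        apply filter_congr
        intro d _
        constructor
        · exact And.right
        · intro h
          refine ⟨fun hd => h ?_, h⟩
          rw [hd, hTaq0, hc0]
      rw [heq, hB]
    · rw [if_neg hTa]
      have hc0 : (1 + T a : K) ≠ 0 := by
        intro h
        exact hTa (by linear_combination h - hself 1)
      have heB : a + a ^ q ∈ univ.filter fun d : K => ¬ T d = 1 + T a := by
        refine mem_filter.2 ⟨mem_univ _, ?_⟩
        rw [hTaq0]
        exact fun h => hc0 h.symm
      have heq : (univ.filter fun d : K => d ≠ a + a ^ q ∧ T d ≠ 1 + T a)
          = (univ.filter fun d : K => ¬ T d = 1 + T a).erase (a + a ^ q) := by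
        ext d
        simp only [mem_erase, mem_filter, mem_univ, true_and]
      rw [heq, card_erase_of_mem heB, hB]
  -- total count
  have hNS : (univ.filter fun v : K × K => stmt8Cond K q v).card
      = q ^ 2 * (q ^ 3 - q ^ 2) + (q ^ 3 - 1 - q ^ 2) * (q ^ 3 - q ^ 2 - 1) := by
    rw [card_eq_sum_card_fiberwise (f := Prod.fst) (t := univ) (fun x _ => mem_univ _)]
    have hfiber : ∀ a : K,
        ((univ.filter fun v : K × K => stmt8Cond K q v).filter fun v => v.1 = a).card
        = (univ.filter fun d => stmt8Cond K q (a, d)).card := by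
      intro a
      refine card_nbij' Prod.snd (fun d => (a, d)) ?_ ?_ ?_ ?_
      · rintro ⟨x, y⟩ hv
        simp only [Finset.mem_coe, mem_filter, mem_univ, true_and] at hv ⊢
        obtain ⟨h1, h2⟩ := hv
        rw [← h2]
        exact h1
      · intro d hd
        simp only [Finset.mem_coe, mem_filter, mem_univ, true_and] at hd ⊢
        exact ⟨hd, trivial⟩
      · rintro ⟨x, y⟩ hv
        simp only [Finset.mem_coe, mem_filter, mem_univ, true_and] at hv
        obtain ⟨-, h2⟩ := hv
        rw [← h2]
      · intro d _
        rfl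
    rw [sum_congr rfl (fun a _ => hfiber a)]
    have hemp : (univ.filter fun d : K => stmt8Cond K q ((0 : K), d)) = ∅ := by
      rw [filter_eq_empty_iff]
      intro d _
      exact fun hc => hc.1 rfl
    set U1 : Finset K := univ.filter fun a : K => ¬ a = 0 ∧ T a = 1 with hU1
    set U2 : Finset K := univ.filter fun a : K => ¬ a = 0 ∧ ¬ T a = 1 with hU2
    have hd2 : Disjoint U1 U2 := by
      rw [Finset.disjoint_left]
      intro x hx1 hx2
      simp only [hU1, hU2, mem_filter] at hx1 hx2
      exact hx2.2.2 hx1.2.2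
    have hd1 : Disjoint ({0} : Finset K) (U1 ∪ U2) := by
      rw [Finset.disjoint_left]
      intro x hx1 hx2
      simp only [mem_singleton] at hx1
      simp only [hU1, hU2, mem_union, mem_filter] at hx2
      rcases hx2 with h | h
      · exact h.2.1 hx1
      · exact h.2.1 hx1
    have hUuniv : (univ : Finset K) = {0} ∪ (U1 ∪ U2) := by
      ext x
      simp only [hU1, hU2, mem_union, mem_singleton, mem_filter, mem_univ, true_and]
      constructor
      · intro _
        by_cases hx : x = 0
        · exact Or.inl hx
        · by_cases hT : T x = 1
          · exact Or.inr (Or.inl ⟨hx, hT⟩)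
          · exact Or.inr (Or.inr ⟨hx, hT⟩)
      · intro _
        trivial
    have hcardU1 : U1.card = q ^ 2 := by
      have : U1 = univ.filter fun a : K => T a = 1 := by
        ext x
        simp only [hU1, mem_filter, mem_univ, true_and]
        constructor
        · exact And.right
        · intro h
          refine ⟨fun h0 => ?_, h⟩
          rw [h0, hT0] at h
          exact one_ne_zero h.symm
      rw [this, hfib2 1 h1F]
    have hcardU12 : U1.card + U2.card = q ^ 3 - 1 := by
      have hun : U1 ∪ U2 = univ.filter fun a : K => ¬ a = 0 := by
        ext x
        simp only [hU1, hU2, mem_union, mem_filter, mem_univ, true_and]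
        constructor
        · rintro (⟨h, -⟩ | ⟨h, -⟩) <;> exact h
        · intro h
          by_cases hT : T x = 1
          · exact Or.inl ⟨h, hT⟩
          · exact Or.inr ⟨h, hT⟩
      have h00 : (univ.filter fun a : K => a = 0) = {0} := by
        ext x
        simp
      have hA0 : (univ.filter fun a : K => ¬ a = 0).card = q ^ 3 - 1 := by
        rw [Finset.filter_not, card_sdiff_of_subset (filter_subset _ _), card_univ, hK, h00,
          card_singleton]
      rw [← card_union_of_disjoint hd2, hun, hA0]
    have hcardU2 : U2.card = q ^ 3 - 1 - q ^ 2 := by omega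
    nth_rewrite 1 [hUuniv]
    rw [Finset.sum_union hd1, Finset.sum_union hd2, Finset.sum_singleton,
      hemp, card_empty]
    have hs1 : ∑ a ∈ U1, (univ.filter fun d => stmt8Cond K q (a, d)).card
        = q ^ 2 * (q ^ 3 - q ^ 2) := by
      have : ∀ a ∈ U1, (univ.filter fun d => stmt8Cond K q (a, d)).card = q ^ 3 - q ^ 2 := by
        intro a ha
        simp only [hU1, mem_filter] at ha
        rw [hperd a ha.2.1, if_pos ha.2.2]
      rw [Finset.sum_congr rfl this, Finset.sum_const, smul_eq_mul, hcardU1]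
    have hs2 : ∑ a ∈ U2, (univ.filter fun d => stmt8Cond K q (a, d)).card
        = (q ^ 3 - 1 - q ^ 2) * (q ^ 3 - q ^ 2 - 1) := by
      have : ∀ a ∈ U2, (univ.filter fun d => stmt8Cond K q (a, d)).card
          = q ^ 3 - q ^ 2 - 1 := by
        intro a ha
        simp only [hU2, mem_filter] at ha
        rw [hperd a ha.2.1, if_neg ha.2.2]
      rw [Finset.sum_congr rfl this, Finset.sum_const, smul_eq_mul, hcardU2]
    rw [hs1, hs2, zero_add]
  -- fixed points
  have hfix : ∀ a d : K, (stmt8Cond K q (a, d) ∧ a ^ q = a ∧ d ^ q = d) ↔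
      (((a ≠ 0 ∧ a ^ q = a) ∧ (d ≠ 0 ∧ d ^ q = d)) ∧ ¬ a + d = 1) := by
    intro a d
    simp only [stmt8Cond]
    constructor
    · rintro ⟨⟨ha, hb, hc⟩, hqa, hqd⟩
      have hqa2 : a ^ q ^ 2 = a := by rw [← hqq a, hqa, hqa]
      have hqd2 : d ^ q ^ 2 = d := by rw [← hqq d, hqd, hqd]
      refine ⟨⟨⟨ha, hqa⟩, ⟨fun hd => hb ?_, hqd⟩⟩, fun h1 => hc ?_⟩
      · linear_combination hqa + hd + hself a
      · linear_combination h1 + hqa + hqa2 + hqd + hqd2 + hself a + hself d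
    · rintro ⟨⟨⟨ha, hqa⟩, hd0, hqd⟩, hsum⟩
      have hqa2 : a ^ q ^ 2 = a := by rw [← hqq a, hqa, hqa]
      have hqd2 : d ^ q ^ 2 = d := by rw [← hqq d, hqd, hqd]
      refine ⟨⟨ha, fun h => hd0 ?_, fun h => hsum ?_⟩, hqa, hqd⟩
      · linear_combination h - hqa - hself a
      · linear_combination h - hqa - hqa2 - hqd - hqd2 - hself a - hself d
  set Fx : Finset (K × K) := univ.filter
      (fun v : K × K => stmt8Cond K q v ∧ v.1 ^ q = v.1 ∧ v.2 ^ q = v.2) with hFx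
  have hFxval : Fx = ((F.erase 0) ×ˢ (F.erase 0)).filter fun v => ¬ v.1 + v.2 = 1 := by
    ext ⟨a, d⟩
    simp only [hFx, mem_filter, mem_univ, true_and, mem_product, mem_erase, hmemF]
    exact hfix a d
  have hbad : (((F.erase 0) ×ˢ (F.erase 0)).filter fun v => v.1 + v.2 = 1).card = q - 2 := by
    have him : (((F.erase 0) ×ˢ (F.erase 0)).filter fun v => v.1 + v.2 = 1)
        = ((F.erase 0).erase 1).image (fun a => (a, a + 1)) := by
      ext ⟨a, d⟩
      simp only [mem_filter, mem_product, mem_erase, mem_image, hmemF]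
      constructor
      · rintro ⟨⟨⟨ha0, haF⟩, hd0, hdF⟩, hsum⟩
        refine ⟨a, ⟨⟨fun h1 => hd0 ?_, ha0, haF⟩, ?_⟩⟩
        · linear_combination hsum - h1
        · rw [Prod.mk.injEq]
          exact ⟨rfl, by linear_combination hself a - hsum⟩
      · rintro ⟨x, ⟨hx1, hx0, hxF⟩, heq⟩
        rw [Prod.mk.injEq] at heq
        obtain ⟨rfl, rfl⟩ := heq
        refine ⟨⟨⟨hx0, hxF⟩, ?_, ?_⟩, ?_⟩
        · intro h
          exact hx1 (by linear_combination h - hself 1)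
        · rw [hadd, hxF, one_pow]
        · linear_combination hself x
    rw [him, card_image_of_injective _ (fun x y h => congrArg Prod.fst h),
      card_erase_of_mem (mem_erase.2 ⟨one_ne_zero, h1F⟩), card_erase_of_mem h0F, hFcard]
    omega
  have hFxcard : Fx.card = (q - 1) * (q - 1) - (q - 2) := by
    have hsub : (((F.erase 0) ×ˢ (F.erase 0)).filter fun v : K × K => ¬ v.1 + v.2 = 1)
        = ((F.erase 0) ×ˢ (F.erase 0))
          \ (((F.erase 0) ×ˢ (F.erase 0)).filter fun v => v.1 + v.2 = 1) :=
      Finset.filter_not _ _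
    rw [hFxval, hsub, card_sdiff_of_subset (filter_subset _ _), hbad, card_product,
      card_erase_of_mem h0F, hFcard]
  -- assemble via the orbit-counting lemma
  have h3f : ∀ x : {v : K × K // stmt8Cond K q v},
      stmt8f part1 (stmt8f part1 (stmt8f part1 x)) = x := by
    intro x
    apply Subtype.ext
    show ((((x.1.1 ^ q) ^ q) ^ q), (((x.1.2 ^ q) ^ q) ^ q)) = x.1
    have h1 : ∀ y : K, ((y ^ q) ^ q) ^ q = y := by
      intro y
      rw [← pow_mul, ← pow_mul, show q * (q * q) = q ^ 3 by ring]
      exact hq3 y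
    rw [h1, h1]
  have hrel : (fun (x y : {v : K × K // stmt8Cond K q v}) => (x.1.1 ^ q, x.1.2 ^ q) = y.1)
      = fun x y => stmt8f part1 x = y := by
    funext x y
    exact propext ⟨fun h => Subtype.ext h, fun h => congrArg Subtype.val h⟩
  have horb := orbit3 (stmt8f part1) h3f
  have hScard : Nat.card {v : K × K // stmt8Cond K q v}
      = (univ.filter fun v : K × K => stmt8Cond K q v).card := by
    rw [Nat.card_eq_fintype_card, Fintype.card_subtype]
  have hfixiff : ∀ x : {v : K × K // stmt8Cond K q v},
      stmt8f part1 x = x ↔ (x.1.1 ^ q = x.1.1 ∧ x.1.2 ^ q = x.1.2) := by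
    intro x
    rw [Subtype.ext_iff]
    show ((x.1.1 ^ q, x.1.2 ^ q) = x.1) ↔ _
    rw [Prod.ext_iff]
  have hfixcard : Nat.card {x : {v : K × K // stmt8Cond K q v} // stmt8f part1 x = x}
      = Fx.card := by
    have e1 := Equiv.subtypeEquivRight hfixiff
    have e2 := Equiv.subtypeSubtypeEquivSubtypeInter (stmt8Cond K q)
      (fun v : K × K => v.1 ^ q = v.1 ∧ v.2 ^ q = v.2)
    rw [Nat.card_congr (e1.trans e2), Nat.card_eq_fintype_card, Fintype.card_subtype, hFx]
  rw [hrel]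
  rw [hScard, hfixcard] at horb
  have hcast : (3 : ℤ) * (Nat.card (Quot fun (x y : {v : K × K // stmt8Cond K q v}) =>
      stmt8f part1 x = y) : ℤ)
      = ((univ.filter fun v : K × K => stmt8Cond K q v).card : ℤ) + 2 * (Fx.card : ℤ) := by
    exact_mod_cast congrArg (Nat.cast : ℕ → ℤ) horb
  rw [hcast, hNS, hFxcard]
  have i1 : q ^ 2 ≤ q ^ 3 := by nlinarith
  have i3 : q ^ 2 + 1 ≤ q ^ 3 := by nlinarith
  have i5 : q - 1 ≤ (q - 1) * (q - 1) := Nat.le_mul_of_pos_left _ (by omega)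
  have c1 : ((q ^ 3 - q ^ 2 : ℕ) : ℤ) = (q : ℤ) ^ 3 - (q : ℤ) ^ 2 := by
    rw [Nat.cast_sub i1]
    push_cast
    ring
  have c2 : ((q ^ 3 - 1 - q ^ 2 : ℕ) : ℤ) = (q : ℤ) ^ 3 - 1 - (q : ℤ) ^ 2 := by
    rw [Nat.cast_sub (by omega : q ^ 2 ≤ q ^ 3 - 1), Nat.cast_sub (by omega : 1 ≤ q ^ 3)]
    push_cast
    ring
  have c3 : ((q ^ 3 - q ^ 2 - 1 : ℕ) : ℤ) = (q : ℤ) ^ 3 - (q : ℤ) ^ 2 - 1 := by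
    rw [Nat.cast_sub (by omega : 1 ≤ q ^ 3 - q ^ 2), Nat.cast_sub i1]
    push_cast
    ring
  have c4 : (((q - 1) * (q - 1) - (q - 2) : ℕ) : ℤ)
      = ((q : ℤ) - 1) * ((q : ℤ) - 1) - ((q : ℤ) - 2) := by
    rw [Nat.cast_sub (by omega : q - 2 ≤ (q - 1) * (q - 1)), Nat.cast_mul,
      Nat.cast_sub (by omega : 1 ≤ q), Nat.cast_sub (by omega : 2 ≤ q)]
    push_cast
    ring
  push_cast
  rw [c1, c2, c3, c4]
  ring
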